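/- If S is a strictly ultrametric matrix of dimension n×n (symmetric, nonnegative entries, S(i,j) ≥ min{S(i,k), S(k,j)} for all i,j,k, and S(i,i) > max{S(i,t) : t ≠ i} for all i), then S is positive definite. -/

import Mathlib

private lemma ultra_key (n : ℕ) (T : Finset (Fin n)) :
    ∀ (S : Matrix (Fin n) (Fin n) ℝ) (x : Fin n → ℝ),
    (∀ i ∈ T, ∀ j ∈ T, S j i = S i j) →
    (∀ i ∈ T, ∀ j ∈ T, 0 ≤ S i j) →
    (∀ i ∈ T, ∀ j ∈ T, ∀ k ∈ T, min (S i k) (S k j) ≤ S i j) →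
    (∀ i ∈ T, 0 < S i i) →
    (∀ i ∈ T, ∀ t ∈ T, t ≠ i → S i t < S i i) →
    (∃ i ∈ T, x i ≠ 0) →
    0 < ∑ i ∈ T, ∑ j ∈ T, x i * S i j * x j := by
  induction T using Finset.strongInduction with
  | _ T ih =>
    intro S x hsym hnn hultra hdpos hstr ⟨i₀, hi₀T, hi₀⟩
    by_cases hsing : ∀ j ∈ T, j = i₀
    · have hT : T = {i₀} := by
        apply Finset.eq_singleton_iff_unique_mem.mpr ⟨hi₀T, hsing⟩
      subst hT
      simp only [Finset.sum_singleton]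
      have h1 : x i₀ * S i₀ i₀ * x i₀ = S i₀ i₀ * (x i₀)^2 := by ring
      rw [h1]
      exact mul_pos (hdpos i₀ (Finset.mem_singleton_self i₀)) (by positivity)
    · push_neg at hsing
      obtain ⟨c, hcT, hci₀⟩ := hsing
      -- the set of off-diagonal pairs is nonempty
      set P : Finset (Fin n × Fin n) := (T ×ˢ T).filter (fun p => p.1 ≠ p.2) with hP
      have hPne : P.Nonempty := ⟨(c, i₀), by
        simp only [hP, Finset.mem_filter, Finset.mem_product]
        exact ⟨⟨hcT, hi₀T⟩, hci₀⟩⟩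
      obtain ⟨p, hpP, hmin⟩ := P.exists_min_image (fun p => S p.1 p.2) hPne
      obtain ⟨⟨haT, hbT⟩, hab⟩ : (p.1 ∈ T ∧ p.2 ∈ T) ∧ p.1 ≠ p.2 := by
        simpa [hP, Finset.mem_filter, Finset.mem_product] using hpP
      set a := p.1
      set b := p.2
      set τ := S a b with hτ
      have hτmin : ∀ i ∈ T, ∀ j ∈ T, i ≠ j → τ ≤ S i j := by
        intro i hi j hj hij
        have hm : (i, j) ∈ P := by
          rw [hP]
          exact Finset.mem_filter.mpr ⟨Finset.mem_product.mpr ⟨hi, hj⟩, hij⟩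
        exact hmin (i, j) hm
      have hτnn : 0 ≤ τ := hnn a haT b hbT
      have hτltd : ∀ i ∈ T, τ < S i i := by
        intro i hi
        rcases eq_or_ne i a with hia | hia
        · rw [hia]; exact hstr a haT b hbT (Ne.symm hab)
        · exact lt_of_le_of_lt (hτmin i hi a haT hia) (hstr i hi a haT (Ne.symm hia))
      have hτle : ∀ i ∈ T, ∀ j ∈ T, τ ≤ S i j := by
        intro i hi j hj
        rcases eq_or_ne i j with rfl | hij
        · exact (hτltd i hi).le
        · exact hτmin i hi j hj hij
      set A : Finset (Fin n) := T.filter (fun i => τ < S i a) with hA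
      set B : Finset (Fin n) := T.filter (fun i => ¬ τ < S i a) with hB
      have hAT : A ⊆ T := Finset.filter_subset _ _
      have hBT : B ⊆ T := Finset.filter_subset _ _
      have haA : a ∈ A := by
        simp only [hA, Finset.mem_filter]
        exact ⟨haT, hτltd a haT⟩
      have hbnA : b ∉ A := by
        simp only [hA, Finset.mem_filter]
        rintro ⟨-, h⟩
        rw [hsym a haT b hbT] at h
        exact lt_irrefl _ h
      have hbB : b ∈ B := by
        simp only [hB, Finset.mem_filter]
        refine ⟨hbT, fun h => ?_⟩
        rw [hsym a haT b hbT] at h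
        exact lt_irrefl _ h
      have hanB : a ∉ B := by
        simp only [hB, Finset.mem_filter]
        rintro ⟨-, h⟩
        exact h (hτltd a haT)
      have hBa : ∀ i ∈ B, S i a = τ := by
        intro i hi
        obtain ⟨hiT, h⟩ := Finset.mem_filter.mp hi
        exact le_antisymm (not_lt.mp h) (hτle i hiT a haT)
      -- cross entries are τ
      have hcross : ∀ i ∈ A, ∀ j ∈ B, S i j = τ := by
        intro i hi j hj
        obtain ⟨hiT, hiA⟩ := Finset.mem_filter.mp hi
        have hjT := hBT hj
        have h1 : min (S a i) (S i j) ≤ S a j := hultra a haT j hjT i hiT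
        have h2 : S a j = τ := (hsym j hjT a haT).trans (hBa j hj)
        have h3 : τ < S a i := by rw [hsym i hiT a haT]; exact hiA
        rw [h2] at h1
        have h4 : S i j ≤ τ := (min_le_iff.mp h1).resolve_left (not_le.mpr h3)
        exact le_antisymm h4 (hτle i hiT j hjT)
      -- the shifted matrix
      set S' : Matrix (Fin n) (Fin n) ℝ := fun i j => S i j - τ with hS'
      have hS'sym : ∀ U ⊆ T, ∀ i ∈ U, ∀ j ∈ U, S' j i = S' i j := by
        intro U hU i hi j hj
        simp only [hS', hsym i (hU hi) j (hU hj)]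
      have hS'nn : ∀ U ⊆ T, ∀ i ∈ U, ∀ j ∈ U, 0 ≤ S' i j := by
        intro U hU i hi j hj
        simp only [hS', sub_nonneg]
        exact hτle i (hU hi) j (hU hj)
      have hS'ultra : ∀ U ⊆ T, ∀ i ∈ U, ∀ j ∈ U, ∀ k ∈ U, min (S' i k) (S' k j) ≤ S' i j := by
        intro U hU i hi j hj k hk
        have h := hultra i (hU hi) j (hU hj) k (hU hk)
        simp only [hS']
        rcases min_le_iff.mp h with h' | h'
        · exact min_le_iff.mpr (Or.inl (by linarith))
        · exact min_le_iff.mpr (Or.inr (by linarith))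
      have hS'str : ∀ U ⊆ T, ∀ i ∈ U, ∀ t ∈ U, t ≠ i → S' i t < S' i i := by
        intro U hU i hi t ht hti
        exact sub_lt_sub_right (hstr i (hU hi) t (hU ht) hti) τ
      have hS'dpos : ∀ U ⊆ T, ∀ i ∈ U, 0 < S' i i := by
        intro U hU i hi
        simp only [hS', sub_pos]
        exact hτltd i (hU hi)
      have hAss : A ⊂ T := (Finset.ssubset_iff_of_subset hAT).mpr ⟨b, hbT, hbnA⟩
      have hBss : B ⊂ T := (Finset.ssubset_iff_of_subset hBT).mpr ⟨a, haT, hanB⟩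
      -- nonnegativity / positivity of the sub-forms
      have hformA : ∀ U, U ⊂ T → ∀ hne : (∃ i ∈ U, x i ≠ 0),
          0 < ∑ i ∈ U, ∑ j ∈ U, x i * S' i j * x j := by
        intro U hU hne
        exact ih U hU S' x (hS'sym U hU.subset) (hS'nn U hU.subset) (hS'ultra U hU.subset)
          (hS'dpos U hU.subset) (hS'str U hU.subset) hne
      have hform0 : ∀ U, U ⊂ T → 0 ≤ ∑ i ∈ U, ∑ j ∈ U, x i * S' i j * x j := by
        intro U hU
        by_cases hne : ∃ i ∈ U, x i ≠ 0
        · exact (hformA U hU hne).le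
        · push_neg at hne
          apply le_of_eq
          symm
          apply Finset.sum_eq_zero
          intro i hi
          apply Finset.sum_eq_zero
          intro j hj
          rw [hne i hi]; ring
      -- splitting the sum
      have hsplit : ∀ f : Fin n → ℝ, ∑ i ∈ T, f i = ∑ i ∈ A, f i + ∑ i ∈ B, f i := by
        intro f
        exact (Finset.sum_filter_add_sum_filter_not T _ f).symm
      have hQ : ∑ i ∈ T, ∑ j ∈ T, x i * S i j * x j
          = (∑ i ∈ A, ∑ j ∈ A, x i * S' i j * x j)
            + (∑ i ∈ B, ∑ j ∈ B, x i * S' i j * x j)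
            + τ * (∑ i ∈ T, x i)^2 := by
        have e1 : ∑ i ∈ T, ∑ j ∈ T, x i * S i j * x j
            = (∑ i ∈ T, ∑ j ∈ T, x i * S' i j * x j) + τ * (∑ i ∈ T, x i)^2 := by
          have : ∀ i ∈ T, ∀ j ∈ T, x i * S i j * x j
              = x i * S' i j * x j + τ * (x i * x j) := by
            intro i _ j _
            simp only [hS']
            ring
          rw [Finset.sum_congr rfl fun i hi => Finset.sum_congr rfl fun j hj => this i hi j hj]
          rw [Finset.sum_congr rfl fun i (_ : i ∈ T) => Finset.sum_add_distrib]
          rw [Finset.sum_add_distrib]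
          congr 1
          rw [sq, Finset.sum_mul_sum, Finset.mul_sum]
          apply Finset.sum_congr rfl
          intro i _
          rw [Finset.mul_sum]
        have e2 : ∑ i ∈ T, ∑ j ∈ T, x i * S' i j * x j
            = (∑ i ∈ A, ∑ j ∈ A, x i * S' i j * x j)
              + (∑ i ∈ B, ∑ j ∈ B, x i * S' i j * x j) := by
          have hAB0 : ∀ i ∈ A, ∑ j ∈ B, x i * S' i j * x j = 0 := by
            intro i hi
            apply Finset.sum_eq_zero
            intro j hj
            have : S' i j = 0 := by simp [hS', hcross i hi j hj]
            rw [this]; ring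
          have hBA0 : ∀ i ∈ B, ∑ j ∈ A, x i * S' i j * x j = 0 := by
            intro i hi
            apply Finset.sum_eq_zero
            intro j hj
            have hv : S i j = τ := (hsym j (hAT hj) i (hBT hi)).trans (hcross j hj i hi)
            have : S' i j = 0 := by simp [hS', hv]
            rw [this]; ring
          rw [hsplit (fun i => ∑ j ∈ T, x i * S' i j * x j)]
          rw [Finset.sum_congr rfl fun i (hi : i ∈ A) =>
            hsplit (fun j => x i * S' i j * x j)]
          rw [Finset.sum_congr (rfl : B = B) fun i (hi : i ∈ B) =>
            hsplit (fun j => x i * S' i j * x j)]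
          rw [Finset.sum_add_distrib, Finset.sum_add_distrib]
          rw [Finset.sum_congr rfl hAB0, Finset.sum_congr rfl hBA0]
          simp
        rw [e1, e2]
      rw [hQ]
      have htail : 0 ≤ τ * (∑ i ∈ T, x i)^2 := by positivity
      by_cases hi₀A : τ < S i₀ a
      · have hi₀A' : i₀ ∈ A := Finset.mem_filter.mpr ⟨hi₀T, hi₀A⟩
        have h1 := hformA A hAss ⟨i₀, hi₀A', hi₀⟩
        have h2 := hform0 B hBss
        linarith
      · have hi₀B' : i₀ ∈ B := Finset.mem_filter.mpr ⟨hi₀T, hi₀A⟩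
        have h1 := hformA B hBss ⟨i₀, hi₀B', hi₀⟩
        have h2 := hform0 A hAss
        linarith

/-- A strictly ultrametric matrix (symmetric, nonnegative entries, ultrametric
inequality, and each diagonal entry strictly dominating its row's off-diagonal
entries, with positive diagonal in the case `n = 1`) is positive definite. -/
theorem strictlyUltrametric_posDef (n : ℕ) (S : Matrix (Fin n) (Fin n) ℝ)
    (hsymm : S.IsSymm)
    (hnonneg : ∀ i j, 0 ≤ S i j)
    (hultra : ∀ i j k, min (S i k) (S k j) ≤ S i j)
    (hdiagpos : ∀ i, 0 < S i i)
    (hstrict : ∀ i t, t ≠ i → S i t < S i i) :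
    S.PosDef := by
  rw [Matrix.posDef_iff_dotProduct_mulVec]
  constructor
  · show S.conjTranspose = S
    ext i j
    simp only [Matrix.conjTranspose_apply, star_trivial]
    have := congrFun (congrFun hsymm j) i
    rw [Matrix.transpose_apply] at this
    exact this.symm
  · intro x hx
    obtain ⟨i₀, hi₀⟩ := Function.ne_iff.mp hx
    have key := ultra_key n Finset.univ S x
      (fun i _ j _ => by
        have := congrFun (congrFun hsymm i) j
        rw [Matrix.transpose_apply] at this
        exact this)
      (fun i _ j _ => hnonneg i j)
      (fun i _ j _ k _ => hultra i j k)
      (fun i _ => hdiagpos i)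
      (fun i _ t _ h => hstrict i t h)
      ⟨i₀, Finset.mem_univ i₀, hi₀⟩
    simp only [dotProduct, Matrix.mulVec, Pi.star_apply, star_trivial]
    calc (0:ℝ) < ∑ i, ∑ j, x i * S i j * x j := key
    _ = ∑ i, x i * ∑ j, S i j * x j := by
        apply Finset.sum_congr rfl
        intro i _
        rw [Finset.mul_sum]
        apply Finset.sum_congr rfl
        intro j _
        ring
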